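/- For k ≥ 1, the only balanced semistandard Young tableaux of order k on alphabet {1,...,k} that are codominant with respect to all simple roots α_1, ..., α_{k−1} (i.e., for each i and each j, among the first j columns the symbol i+1 occurs at least as often as the symbol i) are the rectangular tableaux R_k^a consisting of k rows of common length a, with the s-th row filled entirely with symbol s, for integer offsets a ≥ 0. -/

import Mathlib

/-- A Young diagram of order `n`, given by its (weakly decreasing) row lengths,
vanishing from row `n` on. Rows are indexed from `0`. -/
def IsYoung (n : ℕ) (P : ℕ → ℕ) : Prop :=
  (∀ i, P (i + 1) ≤ P i) ∧ ∀ i, n ≤ i → P i = 0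

/-- The total number of boxes of a Young diagram of order `n`. -/
def ysize (n : ℕ) (P : ℕ → ℕ) : ℕ := ∑ i ∈ Finset.range n, P i

/-- The height of the `j`-th column (columns indexed from `0`). -/
def colH (n : ℕ) (P : ℕ → ℕ) (j : ℕ) : ℕ :=
  ((Finset.range n).filter (fun i => j < P i)).card

/-- The number of boxes of the skew diagram `P/Q`. -/
def skewSize (n : ℕ) (P Q : ℕ → ℕ) : ℕ := ∑ i ∈ Finset.range n, (P i - Q i)

/-- The skew diagram `P/Q` has thickness at most `m`: every column has at most
`m` boxes. -/
def ThickLE (n : ℕ) (P Q : ℕ → ℕ) (m : ℕ) : Prop :=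
  ∀ j, colH n P j ≤ colH n Q j + m

/-- `T` is a semistandard filling of the skew diagram `P/Q`: rows weakly increase
from left to right, columns strictly increase from top to bottom.
`T i j` is the entry in row `i`, column `j`. -/
def SkewSemistd (P Q : ℕ → ℕ) (T : ℕ → ℕ → ℕ) : Prop :=
  (∀ i j, Q i ≤ j → j + 1 < P i → T i j ≤ T i (j + 1)) ∧
  (∀ i j, Q i ≤ j → j < P (i + 1) → T i j < T (i + 1) j)

/-- All entries of the filling `T` of `P/Q` belong to the alphabet `{lo, …, hi}`. -/
def InAlpha (P Q : ℕ → ℕ) (T : ℕ → ℕ → ℕ) (lo hi : ℕ) : Prop :=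
  ∀ i j, Q i ≤ j → j < P i → lo ≤ T i j ∧ T i j ≤ hi

/-- The number of occurrences of the symbol `s` among the first `j` columns of the
filling `T` of `P/Q`. -/
def cntCols (n : ℕ) (P Q : ℕ → ℕ) (T : ℕ → ℕ → ℕ) (s : ℕ) (j : ℕ) : ℕ :=
  ∑ i ∈ Finset.range n, ((Finset.Ico (Q i) (min j (P i))).filter (fun c => T i c = s)).card

/-- The total number of occurrences of the symbol `s` in the filling `T` of `P/Q`. -/
def cntAll (n : ℕ) (P Q : ℕ → ℕ) (T : ℕ → ℕ → ℕ) (s : ℕ) : ℕ :=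
  ∑ i ∈ Finset.range n, ((Finset.Ico (Q i) (P i)).filter (fun c => T i c = s)).card

/-- The filling `T` of `P/Q` is balanced with respect to the alphabet `{lo, …, hi}`:
each symbol occurs exactly `(#P/Q)/(hi+1-lo)` times. -/
def BalancedF (n : ℕ) (P Q : ℕ → ℕ) (T : ℕ → ℕ → ℕ) (lo hi : ℕ) : Prop :=
  ∀ s, lo ≤ s → s ≤ hi → (hi + 1 - lo) * cntAll n P Q T s = skewSize n P Q

/-- The filling `T` of `P/Q` is `α_i`-codominant: among the first `j` columns there
are at least as many occurrences of `i+1` as of `i`, for every `j`. -/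
def Codom (n : ℕ) (P Q : ℕ → ℕ) (T : ℕ → ℕ → ℕ) (i : ℕ) : Prop :=
  ∀ j, cntCols n P Q T i j ≤ cntCols n P Q T (i + 1) j

/-- The length of the bridge at height `i` (for `1 ≤ i ≤ n`) of the skew diagram
`P/Q`: the number of columns whose height in `Q` is `i-1` and in `P` is `i`. -/
def bridge (n : ℕ) (P Q : ℕ → ℕ) (i : ℕ) : ℕ :=
  ((Finset.range (P 0)).filter (fun j => colH n Q j = i - 1 ∧ colH n P j = i)).card

section
variable {k : ℕ} {P : ℕ → ℕ} {T : ℕ → ℕ → ℕ}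

lemma P_anti (hP : IsYoung k P) : ∀ a b : ℕ, a ≤ b → P b ≤ P a := by
  intro a b hab
  induction b, hab using Nat.le_induction with
  | base => exact le_rfl
  | succ n hn ih => exact le_trans (hP.1 n) ih

lemma rowmono (hrow : ∀ i j, j + 1 < P i → T i j ≤ T i (j + 1)) :
    ∀ i c c', c ≤ c' → c' < P i → T i c ≤ T i c' := by
  intro i c c' hcc
  induction c', hcc using Nat.le_induction with
  | base => intro _; exact le_rfl
  | succ n hn ih =>
    intro h
    exact le_trans (ih (Nat.lt_of_succ_lt h)) (hrow i n h)

lemma colbound (hP : IsYoung k P) (hcol : ∀ i j, j < P (i + 1) → T i j < T (i + 1) j)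
    (halpha : InAlpha P (fun _ => 0) T 1 k) :
    ∀ i j, j < P i → i + 1 ≤ T i j := by
  intro i
  induction i with
  | zero => intro j hj; exact (halpha 0 j (Nat.zero_le j) hj).1
  | succ n ih =>
    intro j hj
    have h1 : j < P n := lt_of_lt_of_le hj (hP.1 n)
    have h2 := ih j h1
    have h3 := hcol n j hj
    omega

lemma colstrict (hP : IsYoung k P) (hcol : ∀ i j, j < P (i + 1) → T i j < T (i + 1) j) :
    ∀ i i' j, i < i' → j < P i' → T i j < T i' j := by
  intro i i' j hii'
  induction i', hii' using Nat.le_induction with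
  | base => intro h; exact hcol i j h
  | succ n hn ih =>
    intro h
    have h1 : j < P n := lt_of_lt_of_le h (hP.1 n)
    exact lt_trans (ih h1) (hcol n j h)

lemma card_filter_range_succ (p : ℕ → Prop) [DecidablePred p] (n : ℕ) :
    ((Finset.range (n + 1)).filter p).card
      = ((Finset.range n).filter p).card + (if p n then 1 else 0) := by
  rw [Finset.range_add_one, Finset.filter_insert]
  split_ifs with h
  · rw [Finset.card_insert_of_notMem
      (fun hmem => absurd (Finset.mem_range.mp (Finset.mem_filter.mp hmem).1) (lt_irrefl n))]
  · simp

lemma colfull (hk : 1 ≤ k) (hP : IsYoung k P)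
    (hss : SkewSemistd P (fun _ => 0) T) (ha : InAlpha P (fun _ => 0) T 1 k)
    (hb : BalancedF k P (fun _ => 0) T 1 k)
    (hc : ∀ i, 1 ≤ i → i < k → Codom k P (fun _ => 0) T i) :
    ∀ j, j < P 0 → ∀ i, i < k → j < P i ∧ T i j = i + 1 := by
  have hrow : ∀ i j, j + 1 < P i → T i j ≤ T i (j + 1) := fun i j h => hss.1 i j (Nat.zero_le j) h
  have hcol : ∀ i j, j < P (i + 1) → T i j < T (i + 1) j := fun i j h => hss.2 i j (Nat.zero_le j) h
  intro j
  induction j using Nat.strong_induction_on with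
  | _ j IH =>
  intro hj0
  have IH' : ∀ c, c < j → ∀ i, i < k → c < P i ∧ T i c = i + 1 :=
    fun c hc' i hi => IH c hc' (lt_trans hc' hj0) i hi
  have hPj : ∀ i, i < k → j ≤ P i := by
    intro i hi
    cases j with
    | zero => exact Nat.zero_le _
    | succ c => exact (IH' c (Nat.lt_succ_self c) i hi).1
  -- Step A: T 0 j = 1, via balance
  have hT0j : T 0 j = 1 := by
    by_contra hne
    have h2 : 2 ≤ T 0 j := by
      have := (ha 0 j (Nat.zero_le j) hj0).1; omega
    have hrow0 : ((Finset.Ico 0 (P 0)).filter (fun c => T 0 c = 1)).card = j := by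
      have heq : (Finset.Ico 0 (P 0)).filter (fun c => T 0 c = 1) = Finset.range j := by
        ext c
        simp only [Finset.mem_filter, Finset.mem_Ico, Finset.mem_range, Nat.zero_le, true_and]
        constructor
        · rintro ⟨hcP, hTc⟩
          by_contra hcj
          have : T 0 j ≤ T 0 c := rowmono hrow 0 j c (by omega) hcP
          omega
        · intro hcj
          exact ⟨lt_trans hcj hj0, (IH' c hcj 0 hk).2⟩
      rw [heq, Finset.card_range]
    have hcnt : cntAll k P (fun _ => 0) T 1 = j := by
      simp only [cntAll]
      rw [Finset.sum_eq_single_of_mem 0 (Finset.mem_range.mpr hk)]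
      · exact hrow0
      · intro i hi hne0
        rw [Finset.card_eq_zero, Finset.filter_eq_empty_iff]
        intro c hcmem
        have hcP : c < P i := (Finset.mem_Ico.mp hcmem).2
        have := colbound hP hcol ha i c hcP
        omega
    have hbal := hb 1 le_rfl hk
    rw [show k + 1 - 1 = k from rfl, hcnt] at hbal
    have hsz : skewSize k P (fun _ => 0) = ∑ i ∈ Finset.range k, P i := by
      simp [skewSize]
    have hlt : k * j < ∑ i ∈ Finset.range k, P i := by
      calc k * j = ∑ _i ∈ Finset.range k, j := by
            rw [Finset.sum_const, Finset.card_range, smul_eq_mul, mul_comm]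
        _ < ∑ i ∈ Finset.range k, P i :=
            Finset.sum_lt_sum (fun i hi => hPj i (Finset.mem_range.mp hi))
              ⟨0, Finset.mem_range.mpr hk, hj0⟩
    rw [hsz] at hbal
    omega
  -- column prefix counts at j+1
  have hcnt_succ : ∀ s, 1 ≤ s → s ≤ k →
      cntCols k P (fun _ => 0) T s (j + 1)
        = j + ((Finset.range k).filter (fun i => j < P i ∧ T i j = s)).card := by
    intro s h1 h2
    simp only [cntCols]
    have hterm : ∀ i ∈ Finset.range k,
        ((Finset.Ico 0 (min (j + 1) (P i))).filter (fun c => T i c = s)).card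
          = (if i + 1 = s then j else 0) + (if j < P i ∧ T i j = s then 1 else 0) := by
      intro i hi
      have hi' := Finset.mem_range.mp hi
      have hji := hPj i hi'
      have hfr : ((Finset.range j).filter (fun c => T i c = s)).card
          = if i + 1 = s then j else 0 := by
        split_ifs with h
        · rw [Finset.filter_true_of_mem, Finset.card_range]
          intro c hcj
          rw [(IH' c (Finset.mem_range.mp hcj) i hi').2]; exact h
        · rw [Finset.card_eq_zero, Finset.filter_eq_empty_iff]
          intro c hcj
          rw [(IH' c (Finset.mem_range.mp hcj) i hi').2]; exact h
      by_cases hcase : j < P i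
      · have hmin : min (j + 1) (P i) = j + 1 := by omega
        rw [hmin, (Finset.range_eq_Ico (j + 1)).symm,
          card_filter_range_succ, hfr]
        simp [hcase]
      · have hmin : min (j + 1) (P i) = j := by omega
        rw [hmin, (Finset.range_eq_Ico j).symm, hfr]
        simp [hcase]
    rw [Finset.sum_congr rfl hterm, Finset.sum_add_distrib]
    congr 1
    · rw [Finset.sum_eq_single_of_mem (s - 1) (Finset.mem_range.mpr (by omega))]
      · rw [if_pos (by omega)]
      · intro b _ hb'; rw [if_neg (by omega)]
    · exact (Finset.card_filter _ _).symm
  -- Step B: every symbol s ∈ [1,k] occurs in column j, at a row ≥ s-1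
  have hex : ∀ s, 1 ≤ s → s ≤ k → ∃ i, i < k ∧ j < P i ∧ T i j = s ∧ s ≤ i + 1 := by
    intro s h1
    induction s, h1 using Nat.le_induction with
    | base => intro _; exact ⟨0, hk, hj0, hT0j, le_rfl⟩
    | succ s hs ihs =>
      intro hsk
      obtain ⟨i, hik, hiP, hiT, his⟩ := ihs (by omega)
      have hcd := hc s hs (by omega) (j + 1)
      rw [hcnt_succ s hs (by omega), hcnt_succ (s + 1) (by omega) hsk] at hcd
      have h1' : 0 < ((Finset.range k).filter (fun i => j < P i ∧ T i j = s)).card :=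
        Finset.card_pos.mpr ⟨i, Finset.mem_filter.mpr ⟨Finset.mem_range.mpr hik, hiP, hiT⟩⟩
      have h2' : 0 < ((Finset.range k).filter (fun i => j < P i ∧ T i j = s + 1)).card := by
        omega
      obtain ⟨i', hi'⟩ := Finset.card_pos.mp h2'
      rw [Finset.mem_filter, Finset.mem_range] at hi'
      obtain ⟨hi'k, hi'P, hi'T⟩ := hi'
      refine ⟨i', hi'k, hi'P, hi'T, ?_⟩
      have hlt : i < i' := by
        rcases lt_trichotomy i i' with h | h | h
        · exact h
        · exfalso; rw [h, hi'T] at hiT; omega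
        · exfalso
          have := colstrict hP hcol i' i j h hiP
          omega
      omega
  intro i hik
  obtain ⟨i₀, hi₀k, hi₀P, hi₀T, hle⟩ := hex (i + 1) (by omega) (by omega)
  have hub := colbound hP hcol ha i₀ j hi₀P
  have : i₀ = i := by omega
  subst this
  exact ⟨hi₀P, hi₀T⟩
end

/-- For `k ≥ 1`, the only balanced semistandard Young tableaux of order `k` on the
alphabet `{1, …, k}` that are `α_i`-codominant for all `i = 1, …, k-1` are the
rectangular tableaux `R_k^a` (with `k` rows of common length `a`, row `s` filled with
the symbol `s`), for integer offsets `a ≥ 0`. -/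
theorem stmt_3 (k : ℕ) (hk : 1 ≤ k) (P : ℕ → ℕ) (hP : IsYoung k P) (T : ℕ → ℕ → ℕ) :
    (SkewSemistd P (fun _ => 0) T ∧ InAlpha P (fun _ => 0) T 1 k ∧
      BalancedF k P (fun _ => 0) T 1 k ∧
      (∀ i, 1 ≤ i → i < k → Codom k P (fun _ => 0) T i)) ↔
    (∃ a : ℕ, (∀ i, i < k → P i = a) ∧ ∀ i j, i < k → j < P i → T i j = i + 1) := by
  constructor
  · rintro ⟨hss, ha, hb, hc⟩
    by_cases h0 : P 0 = 0
    · refine ⟨0, fun i hi => ?_, fun i j hi hj => ?_⟩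
      · have := P_anti hP 0 i (Nat.zero_le i); omega
      · have := P_anti hP 0 i (Nat.zero_le i); omega
    · have hmain := colfull hk hP hss ha hb hc
      refine ⟨P 0, fun i hi => ?_, fun i j hi hj => ?_⟩
      · have h1 := P_anti hP 0 i (Nat.zero_le i)
        have h2 := (hmain (P 0 - 1) (by omega) i hi).1
        omega
      · have hPi := P_anti hP 0 i (Nat.zero_le i)
        exact (hmain j (by omega) i hi).2
  · rintro ⟨a, hPa, hT⟩
    have hP0 : ∀ i, k ≤ i → P i = 0 := hP.2
    have key : ∀ (u : ℕ) (s : ℕ), 1 ≤ s → s ≤ k →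
        (∀ i ∈ Finset.range k, u ≤ P i) →
        ∀ i ∈ Finset.range k,
          ((Finset.Ico 0 u).filter (fun c => T i c = s)).card = if i + 1 = s then u else 0 := by
      intro u s h1 h2 hu i hi
      have hik := Finset.mem_range.mp hi
      rw [(Finset.range_eq_Ico u).symm]
      split_ifs with h
      · rw [Finset.filter_true_of_mem, Finset.card_range]
        intro c hc
        have hc' := Finset.mem_range.mp hc
        rw [hT i c hik (lt_of_lt_of_le hc' (hu i hi))]; exact h
      · rw [Finset.card_eq_zero, Finset.filter_eq_empty_iff]
        intro c hc
        have hc' := Finset.mem_range.mp hc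
        rw [hT i c hik (lt_of_lt_of_le hc' (hu i hi))]; exact h
    have sum_ite : ∀ (s u : ℕ), 1 ≤ s → s ≤ k →
        (∑ i ∈ Finset.range k, if i + 1 = s then u else 0) = u := by
      intro s u h1 h2
      rw [Finset.sum_eq_single_of_mem (s - 1) (Finset.mem_range.mpr (by omega))]
      · rw [if_pos (by omega)]
      · intro b _ hb'; rw [if_neg (by omega)]
    refine ⟨⟨?_, ?_⟩, ?_, ?_, ?_⟩
    · intro i j _ h2
      rcases Nat.lt_or_ge i k with hik | hik
      · rw [hT i j hik (by omega), hT i (j + 1) hik h2]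
      · rw [hP0 i hik] at h2; omega
    · intro i j _ h2
      rcases Nat.lt_or_ge (i + 1) k with hik | hik
      · have hik' : i < k := by omega
        have hj : j < P i := by rw [hPa i hik']; rw [hPa (i + 1) hik] at h2; exact h2
        rw [hT i j hik' hj, hT (i + 1) j hik h2]; omega
      · rw [hP0 (i + 1) hik] at h2; omega
    · intro i j _ hj
      rcases Nat.lt_or_ge i k with hik | hik
      · rw [hT i j hik hj]
        constructor <;> omega
      · rw [hP0 i hik] at hj; omega
    · intro s h1 h2
      have hsz : skewSize k P (fun _ => 0) = k * a := by
        simp only [skewSize, Nat.sub_zero]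
        rw [Finset.sum_congr rfl (fun i hi => hPa i (Finset.mem_range.mp hi)),
          Finset.sum_const, Finset.card_range, smul_eq_mul]
      have hcnt : cntAll k P (fun _ => 0) T s = a := by
        simp only [cntAll]
        have hterm : ∀ i ∈ Finset.range k,
            ((Finset.Ico 0 (P i)).filter (fun c => T i c = s)).card
              = if i + 1 = s then a else 0 := by
          intro i hi
          rw [hPa i (Finset.mem_range.mp hi)]
          exact key a s h1 h2 (fun i' hi' => le_of_eq (hPa i' (Finset.mem_range.mp hi')).symm) i hi
        rw [Finset.sum_congr rfl hterm]
        exact sum_ite s a h1 h2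
      rw [hsz, hcnt, show k + 1 - 1 = k from rfl]
    · intro i h1 h2 j
      have hC : ∀ s, 1 ≤ s → s ≤ k → cntCols k P (fun _ => 0) T s j = min j a := by
        intro s hs1 hs2
        simp only [cntCols]
        have hterm : ∀ i' ∈ Finset.range k,
            ((Finset.Ico 0 (min j (P i'))).filter (fun c => T i' c = s)).card
              = if i' + 1 = s then min j a else 0 := by
          intro i' hi'
          rw [hPa i' (Finset.mem_range.mp hi')]
          exact key (min j a) s hs1 hs2
            (fun i'' hi'' => by rw [hPa i'' (Finset.mem_range.mp hi'')]; omega) i' hi'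
        rw [Finset.sum_congr rfl hterm]
        exact sum_ite s (min j a) hs1 hs2
      rw [hC i h1 (by omega), hC (i + 1) (by omega) h2]
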